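/- For all k, n ∈ ℕ₀, v ∈ ℂ, and u ∈ ℂ with Re u > 0, one has |(k+v)_n/(k+u)_n| ≤ max{(Re u)^{−1}, 1} · (1+n)^{1+|v|}. -/

import Mathlib

open Complex Finset

/-- The Pochhammer symbol (rising factorial) `(z)_n = z(z+1)⋯(z+n-1)`. -/
noncomputable def poch (z : ℂ) (n : ℕ) : ℂ := ∏ i ∈ Finset.range n, (z + i)

/-- Bernoulli-style telescoping bound. -/
lemma poch_aux_B (a p c : ℝ) (ha : 0 ≤ a) (hp1 : 1 ≤ p) (hap : a ≤ p) (hc : 1 ≤ c) (n : ℕ) :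
    ∏ i ∈ Finset.range n, (c + i + a) ≤
      ((c + n) / c) ^ p * ∏ i ∈ Finset.range n, (c + i) := by
  have hc0 : (0:ℝ) < c := lt_of_lt_of_le one_pos hc
  induction n with
  | zero => simp [div_self hc0.ne', Real.one_rpow]
  | succ n ih =>
    have hcn : (1:ℝ) ≤ c + n := le_add_of_le_of_nonneg hc (by positivity)
    have hcn0 : (0:ℝ) < c + n := lt_of_lt_of_le one_pos hcn
    have h0 : (0:ℝ) ≤ 1 / (c + n) := by positivity
    have hber : 1 + p * (1 / (c + n)) ≤ (1 + 1 / (c + n)) ^ p :=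
      one_add_mul_self_le_rpow_one_add (by linarith) hp1
    have hkey : c + n + a ≤ ((c + n + 1) / (c + n)) ^ p * (c + n) := by
      have h1 : ((c + n + 1) / (c + n)) = 1 + 1 / (c + n) := by field_simp
      rw [h1]
      have h2 : (1 + a / (c + n)) * (c + n) = c + n + a := by field_simp
      have h3 : a / (c + n) ≤ p * (1 / (c + n)) := by
        rw [mul_one_div]
        gcongr
      nlinarith [hber, hcn0, h2, h3]
    have hsplit : ((c + (n:ℝ) + 1) / c) ^ p
        = ((c + n) / c) ^ p * ((c + n + 1) / (c + n)) ^ p := by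
      rw [← Real.mul_rpow (by positivity) (by positivity)]
      congr 1
      field_simp
      try ring
    have hprodpos : (0:ℝ) ≤ ∏ i ∈ Finset.range n, (c + i) := by
      apply Finset.prod_nonneg; intro i _; positivity
    rw [Finset.prod_range_succ, Finset.prod_range_succ]
    have hcast : (((n:ℕ)+1 : ℕ) : ℝ) = (n:ℝ) + 1 := by push_cast; ring
    rw [hcast, ← add_assoc, hsplit]
    have hLa : (0:ℝ) ≤ c + n + a := by positivity
    calc (∏ i ∈ Finset.range n, (c + i + a)) * (c + ↑n + a)
        ≤ (((c + n) / c) ^ p * ∏ i ∈ Finset.range n, (c + i)) * (c + ↑n + a) :=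
          mul_le_mul_of_nonneg_right ih hLa
      _ ≤ (((c + n) / c) ^ p * ∏ i ∈ Finset.range n, (c + i)) *
            (((c + n + 1) / (c + n)) ^ p * (c + n)) :=
          mul_le_mul_of_nonneg_left hkey (by positivity)
      _ = ((c + ↑n) / c) ^ p * ((c + ↑n + 1) / (c + ↑n)) ^ p *
            ((∏ i ∈ Finset.range n, (c + ↑i)) * (c + ↑n)) := by ring

/-- The key real inequality about products. -/
lemma poch_aux_key (a r : ℝ) (ha : 0 ≤ a) (hr : 0 < r) (k n : ℕ) :
    ∏ i ∈ Finset.range n, ((k:ℝ) + i + a) ≤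
      max r⁻¹ 1 * (1 + (n:ℝ)) ^ (1 + a) * ∏ i ∈ Finset.range n, ((k:ℝ) + i + r) := by
  have hmax1 : (1:ℝ) ≤ max r⁻¹ 1 := le_max_right _ _
  rcases Nat.eq_zero_or_pos k with rfl | hk
  · -- k = 0
    rcases Nat.eq_zero_or_pos n with rfl | hn
    · simpa [Real.one_rpow] using hmax1
    · obtain ⟨m, rfl⟩ : ∃ m, n = m + 1 := ⟨n - 1, (Nat.succ_pred_eq_of_pos hn).symm⟩
      rw [Finset.prod_range_succ', Finset.prod_range_succ']
      simp only [Nat.cast_zero, Nat.cast_add, Nat.cast_one, zero_add]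
      have hm1 : (0:ℝ) < 1 + (m:ℝ) := by positivity
      have hB : ∀ p : ℝ, 1 ≤ p → a ≤ p →
          ∏ i ∈ Finset.range m, ((i:ℝ) + 1 + a) ≤
            (1 + (m:ℝ)) ^ p * ∏ i ∈ Finset.range m, ((i:ℝ) + 1) := by
        intro p hp1 hap
        have h := poch_aux_B a p 1 ha hp1 hap le_rfl m
        have e1 : ∏ i ∈ Finset.range m, ((i:ℝ) + 1 + a)
            = ∏ i ∈ Finset.range m, ((1:ℝ) + i + a) :=
          Finset.prod_congr rfl (fun i _ => by ring)
        have e2 : ∏ i ∈ Finset.range m, ((i:ℝ) + 1)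
            = ∏ i ∈ Finset.range m, ((1:ℝ) + i) :=
          Finset.prod_congr rfl (fun i _ => by ring)
        rw [e1, e2]
        calc ∏ i ∈ Finset.range m, ((1:ℝ) + i + a)
            ≤ ((1 + (m:ℝ)) / 1) ^ p * ∏ i ∈ Finset.range m, ((1:ℝ) + i) := h
          _ = (1 + (m:ℝ)) ^ p * ∏ i ∈ Finset.range m, ((1:ℝ) + i) := by rw [div_one]
      have hden : ∏ i ∈ Finset.range m, ((i:ℝ) + 1) ≤
          ∏ i ∈ Finset.range m, ((i:ℝ) + 1 + r) := by
        apply Finset.prod_le_prod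
        · intro i _; positivity
        · intro i _; nlinarith
      have hmr : (1:ℝ) ≤ max r⁻¹ 1 * r := by
        rcases le_total r 1 with h | h
        · have h1 : (1:ℝ) ≤ r⁻¹ := by
            nlinarith [mul_inv_cancel₀ hr.ne', inv_pos.mpr hr]
          rw [max_eq_left h1, inv_mul_cancel₀ hr.ne']
        · calc (1:ℝ) ≤ r := h
            _ = 1 * r := (one_mul r).symm
            _ ≤ max r⁻¹ 1 * r := mul_le_mul_of_nonneg_right hmax1 hr.le
      have hscal : a * (1 + (m:ℝ)) ^ (max a 1) ≤ (1 + ((m:ℝ)+1)) ^ (1 + a) := by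
        rcases le_total a 1 with hA | hA
        · rw [max_eq_right hA]
          calc a * (1 + (m:ℝ)) ^ (1:ℝ) = a * (1 + m) := by rw [Real.rpow_one]
            _ ≤ 1 + ((m:ℝ)+1) := by nlinarith
            _ = (1 + ((m:ℝ)+1)) ^ (1:ℝ) := (Real.rpow_one _).symm
            _ ≤ (1 + ((m:ℝ)+1)) ^ (1 + a) :=
              Real.rpow_le_rpow_of_exponent_le (by nlinarith) (by nlinarith)
        · rw [max_eq_left hA]
          have hfac : (1 + ((m:ℝ)+1)) = (1 + m) * (1 + 1/(1+(m:ℝ))) := by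
            field_simp
            try ring
          have h0 : (0:ℝ) ≤ 1 / (1 + (m:ℝ)) := by positivity
          have hber : 1 + a * (1 / (1 + (m:ℝ))) ≤ (1 + 1/(1+(m:ℝ))) ^ a :=
            one_add_mul_self_le_rpow_one_add (by linarith) hA
          have hsplit : (1 + ((m:ℝ)+1)) ^ (1 + a)
              = (1 + ((m:ℝ)+1)) * ((1+(m:ℝ)) ^ a * (1 + 1/(1+(m:ℝ))) ^ a) := by
            rw [Real.rpow_add (by positivity), Real.rpow_one, hfac,
              Real.mul_rpow (by positivity) (by positivity)]
            try ring_nf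
          rw [hsplit]
          have h2 : a ≤ (1 + ((m:ℝ)+1)) * (1 + a * (1 / (1 + (m:ℝ)))) := by
            have key : a * (1 / (1 + (m:ℝ))) * (1 + (m:ℝ)) = a := by
              field_simp
            nlinarith [key, mul_nonneg ha (by positivity : (0:ℝ) ≤ 1/(1+(m:ℝ)))]
          have h1 : a ≤ (1 + ((m:ℝ)+1)) * (1 + 1/(1+(m:ℝ))) ^ a := by
            nlinarith [h2, hber]
          have hp : (0:ℝ) ≤ (1 + (m:ℝ)) ^ a := by positivity
          nlinarith [mul_le_mul_of_nonneg_right h1 hp]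
      have hprod_nonneg : (0:ℝ) ≤ ∏ i ∈ Finset.range m, ((i:ℝ) + 1) := by
        apply Finset.prod_nonneg; intro i _; positivity
      have hBmax := hB (max a 1) (le_max_right _ _) (le_max_left _ _)
      calc (∏ i ∈ Finset.range m, ((i:ℝ) + 1 + a)) * a
          = a * ∏ i ∈ Finset.range m, ((i:ℝ) + 1 + a) := by ring
        _ ≤ a * ((1 + (m:ℝ)) ^ (max a 1) * ∏ i ∈ Finset.range m, ((i:ℝ) + 1)) :=
            mul_le_mul_of_nonneg_left hBmax ha
        _ = (a * (1 + (m:ℝ)) ^ (max a 1)) * ∏ i ∈ Finset.range m, ((i:ℝ) + 1) := by ring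
        _ ≤ ((1 + ((m:ℝ)+1)) ^ (1 + a)) * ∏ i ∈ Finset.range m, ((i:ℝ) + 1) :=
            mul_le_mul_of_nonneg_right hscal hprod_nonneg
        _ ≤ ((1 + ((m:ℝ)+1)) ^ (1 + a)) * ∏ i ∈ Finset.range m, ((i:ℝ) + 1 + r) :=
            mul_le_mul_of_nonneg_left hden (by positivity)
        _ ≤ (max r⁻¹ 1 * r) *
              (((1 + ((m:ℝ)+1)) ^ (1 + a)) * ∏ i ∈ Finset.range m, ((i:ℝ) + 1 + r)) := by
            apply le_mul_of_one_le_left _ hmr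
            apply mul_nonneg (by positivity)
            apply Finset.prod_nonneg; intro i _; positivity
        _ = max r⁻¹ 1 * (1 + ((m:ℝ)+1)) ^ (1 + a) *
              ((∏ i ∈ Finset.range m, ((i:ℝ) + 1 + r)) * r) := by ring
  · -- k ≥ 1
    have hk1 : (1:ℝ) ≤ (k:ℝ) := by exact_mod_cast hk
    have hk0 : (0:ℝ) < (k:ℝ) := lt_of_lt_of_le one_pos hk1
    have hB := poch_aux_B a (1+a) (k:ℝ) ha (by nlinarith) (by nlinarith) hk1 n
    have hratio : ((k:ℝ) + n) / k ≤ 1 + n := by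
      rw [div_le_iff₀ hk0]
      nlinarith [Nat.cast_nonneg (α := ℝ) n]
    have hpow : (((k:ℝ) + n) / k) ^ (1+a) ≤ (1 + (n:ℝ)) ^ (1+a) :=
      Real.rpow_le_rpow (by positivity) hratio (by positivity)
    have hden : ∏ i ∈ Finset.range n, ((k:ℝ) + i) ≤
        ∏ i ∈ Finset.range n, ((k:ℝ) + i + r) := by
      apply Finset.prod_le_prod
      · intro i _; positivity
      · intro i _; nlinarith
    have hprod_nonneg : (0:ℝ) ≤ ∏ i ∈ Finset.range n, ((k:ℝ) + i) := by
      apply Finset.prod_nonneg; intro i _; positivity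
    calc ∏ i ∈ Finset.range n, ((k:ℝ) + i + a)
        ≤ (((k:ℝ) + n) / k) ^ (1+a) * ∏ i ∈ Finset.range n, ((k:ℝ) + i) := hB
      _ ≤ (1 + (n:ℝ)) ^ (1+a) * ∏ i ∈ Finset.range n, ((k:ℝ) + i) :=
          mul_le_mul_of_nonneg_right hpow hprod_nonneg
      _ ≤ (1 + (n:ℝ)) ^ (1+a) * ∏ i ∈ Finset.range n, ((k:ℝ) + i + r) :=
          mul_le_mul_of_nonneg_left hden (by positivity)
      _ ≤ max r⁻¹ 1 * ((1 + (n:ℝ)) ^ (1+a) * ∏ i ∈ Finset.range n, ((k:ℝ) + i + r)) := by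
          apply le_mul_of_one_le_left _ hmax1
          apply mul_nonneg (by positivity)
          apply Finset.prod_nonneg; intro i _; positivity
      _ = max r⁻¹ 1 * (1 + (n:ℝ)) ^ (1+a) * ∏ i ∈ Finset.range n, ((k:ℝ) + i + r) := by
          ring

theorem poch_ratio_bound (k n : ℕ) (v : ℂ) (u : ℂ) (hu : 0 < u.re) :
    ‖poch ((k : ℂ) + v) n / poch ((k : ℂ) + u) n‖ ≤
      max (u.re)⁻¹ 1 * (1 + (n : ℝ)) ^ (1 + ‖v‖) := by
  set a := ‖v‖ with ha_def
  set r := u.re with hr_def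
  have ha : 0 ≤ a := norm_nonneg v
  have hnum : ‖poch ((k:ℂ) + v) n‖ ≤ ∏ i ∈ Finset.range n, ((k:ℝ) + i + a) := by
    rw [poch, norm_prod]
    apply Finset.prod_le_prod (fun i _ => norm_nonneg _)
    intro i _
    have he : (k:ℂ) + v + i = ((k:ℂ) + i) + v := by ring
    rw [he]
    calc ‖((k:ℂ) + i) + v‖ ≤ ‖(k:ℂ) + (i:ℂ)‖ + ‖v‖ := norm_add_le _ _
      _ = (k:ℝ) + i + a := by
          congr 1
          have he2 : (k:ℂ) + (i:ℂ) = ((k + i : ℕ) : ℂ) := by push_cast; ring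
          rw [he2, Complex.norm_natCast]
          push_cast; ring
  have hden : ∀ i ∈ Finset.range n, ((k:ℝ) + i + r) ≤ ‖(k:ℂ) + u + i‖ := by
    intro i _
    have hre : ((k:ℂ) + u + i).re = (k:ℝ) + i + r := by
      simp [Complex.add_re, hr_def]
      ring
    calc (k:ℝ) + i + r = ((k:ℂ) + u + i).re := hre.symm
      _ ≤ ‖(k:ℂ) + u + i‖ := Complex.re_le_norm _
      _ = ‖(k:ℂ) + u + i‖ := rfl
  have hdpos : (0:ℝ) < ∏ i ∈ Finset.range n, ((k:ℝ) + i + r) := by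
    apply Finset.prod_pos; intro i _; positivity
  have hden' : ∏ i ∈ Finset.range n, ((k:ℝ) + i + r) ≤ ‖poch ((k:ℂ) + u) n‖ := by
    rw [poch, norm_prod]
    apply Finset.prod_le_prod
    · intro i _; positivity
    · exact hden
  have hnum_nonneg : (0:ℝ) ≤ ∏ i ∈ Finset.range n, ((k:ℝ) + i + a) := by
    apply Finset.prod_nonneg; intro i _; positivity
  rw [norm_div]
  calc ‖poch ((k:ℂ) + v) n‖ / ‖poch ((k:ℂ) + u) n‖
      ≤ (∏ i ∈ Finset.range n, ((k:ℝ) + i + a)) / (∏ i ∈ Finset.range n, ((k:ℝ) + i + r)) :=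
        div_le_div₀ hnum_nonneg hnum hdpos hden'
    _ ≤ max r⁻¹ 1 * (1 + (n:ℝ)) ^ (1 + a) := by
        rw [div_le_iff₀ hdpos]
        exact poch_aux_key a r ha hu k n
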